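/- Energy dissipation of the continuous-in-time IEQ-enlarged DG system (3.6): suppose u, q : ℝ → V and U : ℝ → H are differentiable, and for each t ∈ ℝ let T(t) : H → H be a self-adjoint bounded linear operator, such that for every t: U'(t) = (1/2) T(t) u'(t), and for all φ, ψ ∈ V: ⟨u'(t), φ⟩ + b(u(t), φ) = −A(φ, q(t)) − ⟨T(t) U(t), φ⟩ and ⟨q(t), ψ⟩ = A(u(t), ψ). Then t ↦ E(u(t), q(t), U(t)) is differentiable with derivative equal to −‖u'(t)‖² ≤ 0 at every t. -/

import Mathlib

/-- Derivative of a quadratic form given by a (finite-dimensional) bilinear map. -/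
lemma aux_bilin_hasDerivAt {E : Type*} [NormedAddCommGroup E] [NormedSpace ℝ E]
    [FiniteDimensional ℝ E] (b : E →ₗ[ℝ] E →ₗ[ℝ] ℝ) {u : ℝ → E} {u' : E} {t : ℝ}
    (hu : HasDerivAt u u' t) :
    HasDerivAt (fun s => b (u s) (u s)) (b u' (u t) + b (u t) u') t := by
  set Bc : E →L[ℝ] E →L[ℝ] ℝ :=
    LinearMap.toContinuousLinearMap
      ((LinearMap.toContinuousLinearMap :
        (E →ₗ[ℝ] ℝ) ≃ₗ[ℝ] (E →L[ℝ] ℝ)).toLinearMap.comp b) with hBc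
  have hBc_apply : ∀ x y : E, Bc x y = b x y := by intro x y; simp [hBc]
  have hc : HasDerivAt (fun s => Bc (u s)) (Bc u') t :=
    Bc.hasFDerivAt.comp_hasDerivAt t hu
  have h := hc.clm_apply hu
  simp only [hBc_apply] at h
  exact h

/-- Derivative through a linear map on a finite-dimensional space. -/
lemma aux_lin_hasDerivAt {E : Type*} [NormedAddCommGroup E] [NormedSpace ℝ E]
    [FiniteDimensional ℝ E] (f : E →ₗ[ℝ] ℝ) {u : ℝ → E} {u' : E} {t : ℝ}
    (hu : HasDerivAt u u' t) :
    HasDerivAt (fun s => f (u s)) (f u') t := by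
  have h := (LinearMap.toContinuousLinearMap f).hasFDerivAt.comp_hasDerivAt t hu
  exact h

/-- Energy dissipation of the continuous-in-time IEQ-enlarged DG system (3.6). -/
theorem stmt_1
    {H : Type*} [NormedAddCommGroup H] [InnerProductSpace ℝ H] [CompleteSpace H]
    (V : Submodule ℝ H) [FiniteDimensional ℝ V]
    (A : V →ₗ[ℝ] V →ₗ[ℝ] ℝ)
    (b : V →ₗ[ℝ] V →ₗ[ℝ] ℝ)
    (hb_symm : ∀ x y : V, b x y = b y x)
    (hb_pos : ∀ x : V, 0 ≤ b x x)
    (u q u' q' : ℝ → V) (U U' : ℝ → H)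
    (T : ℝ → H →L[ℝ] H)
    (hT : ∀ t : ℝ, ∀ x y : H, (inner ℝ (T t x) y : ℝ) = (inner ℝ x (T t y) : ℝ))
    (hu : ∀ t : ℝ, HasDerivAt u (u' t) t)
    (hq : ∀ t : ℝ, HasDerivAt q (q' t) t)
    (hU : ∀ t : ℝ, HasDerivAt U (U' t) t)
    (hUeq : ∀ t : ℝ, U' t = (1/2 : ℝ) • T t (u' t : H))
    (heq1 : ∀ t : ℝ, ∀ φ : V,
      (inner ℝ (u' t : H) (φ : H) : ℝ) + b (u t) φ
        = -A φ (q t) - (inner ℝ (T t (U t)) (φ : H) : ℝ))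
    (heq2 : ∀ t : ℝ, ∀ ψ : V, (inner ℝ (q t : H) (ψ : H) : ℝ) = A (u t) ψ) :
    ∀ t : ℝ,
      HasDerivAt (fun s : ℝ => (1/2) * ‖q s‖^2 + ‖U s‖^2 + (1/2) * b (u s) (u s))
        (-‖u' t‖^2) t ∧ -‖u' t‖^2 ≤ 0 := by
  intro t
  refine ⟨?_, neg_nonpos.mpr (by positivity)⟩
  have huH : HasDerivAt (fun s => (u s : H)) ((u' t : H)) t :=
    V.subtypeL.hasFDerivAt.comp_hasDerivAt t (hu t)
  have hqH : HasDerivAt (fun s => (q s : H)) ((q' t : H)) t :=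
    V.subtypeL.hasFDerivAt.comp_hasDerivAt t (hq t)
  have hbderiv : HasDerivAt (fun s => b (u s) (u s))
      (b (u' t) (u t) + b (u t) (u' t)) t := aux_bilin_hasDerivAt b (hu t)
  have hqinner : HasDerivAt (fun s => (inner ℝ ((q s : H)) ((q s : H)) : ℝ))
      (inner ℝ ((q t : H)) ((q' t : H)) + inner ℝ ((q' t : H)) ((q t : H))) t :=
    hqH.inner ℝ hqH
  have hUinner : HasDerivAt (fun s => (inner ℝ (U s) (U s) : ℝ))
      (inner ℝ (U t) (U' t) + inner ℝ (U' t) (U t)) t :=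
    (hU t).inner ℝ (hU t)
  have hD : HasDerivAt
      (fun s : ℝ => (1/2) * ‖q s‖^2 + ‖U s‖^2 + (1/2) * b (u s) (u s))
      ((1/2) * (inner ℝ ((q t : H)) ((q' t : H)) + inner ℝ ((q' t : H)) ((q t : H)))
        + (inner ℝ (U t) (U' t) + inner ℝ (U' t) (U t))
        + (1/2) * (b (u' t) (u t) + b (u t) (u' t))) t := by
    have h := ((hqinner.const_mul ((1:ℝ)/2)).add hUinner).add (hbderiv.const_mul ((1:ℝ)/2))
    have hfun : (fun s : ℝ => (1/2) * ‖q s‖^2 + ‖U s‖^2 + (1/2) * b (u s) (u s))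
        = (fun s : ℝ => (1/2) * (inner ℝ ((q s : H)) ((q s : H)) : ℝ)
            + (inner ℝ (U s) (U s) : ℝ) + (1/2) * b (u s) (u s)) := by
      funext s
      have h1 : ‖q s‖^2 = (inner ℝ ((q s : H)) ((q s : H)) : ℝ) := by
        rw [real_inner_self_eq_norm_sq, Submodule.coe_norm]
      have h2 : ‖U s‖^2 = (inner ℝ (U s) (U s) : ℝ) := (real_inner_self_eq_norm_sq _).symm
      rw [h1, h2]
    rw [hfun]
    exact h
  -- differentiate heq2 with ψ = q t fixed
  have hq'A : (inner ℝ ((q' t : H)) ((q t : H)) : ℝ) = A (u' t) (q t) := by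
    have h1 : HasDerivAt (fun s => (inner ℝ ((q s : H)) ((q t : H)) : ℝ))
        (inner ℝ ((q' t : H)) ((q t : H))) t := by
      have := hqH.inner ℝ (hasDerivAt_const t ((q t : H)))
      simpa using this
    have h2 : HasDerivAt (fun s => (inner ℝ ((q s : H)) ((q t : H)) : ℝ))
        (A.flip (q t) (u' t)) t := by
      have h3 := aux_lin_hasDerivAt (A.flip (q t)) (hu t)
      have hfun : (fun s => (inner ℝ ((q s : H)) ((q t : H)) : ℝ))
          = fun s => A.flip (q t) (u s) := by
        funext s
        rw [heq2 s (q t)]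
        simp
      rw [hfun]
      exact h3
    have := h1.unique h2
    rw [this]; simp
  -- identify the derivative value
  have hval : (1/2 : ℝ) * (inner ℝ ((q t : H)) ((q' t : H)) + inner ℝ ((q' t : H)) ((q t : H)))
        + (inner ℝ (U t) (U' t) + inner ℝ (U' t) (U t))
        + (1/2) * (b (u' t) (u t) + b (u t) (u' t)) = -‖u' t‖^2 := by
    have hUterm : (inner ℝ (U' t) (U t) : ℝ)
        = (1/2 : ℝ) * inner ℝ ((u' t : H)) (T t (U t)) := by
      rw [hUeq t, real_inner_smul_left, hT t]
    have hsymm : (inner ℝ (U t) (U' t) : ℝ) = inner ℝ (U' t) (U t) := real_inner_comm _ _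
    have hqsymm : (inner ℝ ((q t : H)) ((q' t : H)) : ℝ) = inner ℝ ((q' t : H)) ((q t : H)) :=
      real_inner_comm _ _
    have hb1 : b (u' t) (u t) = b (u t) (u' t) := hb_symm _ _
    have hbe : (b (u t)) (u' t)
        = -A (u' t) (q t) - inner ℝ (T t (U t)) ((u' t : H))
          - inner ℝ ((u' t : H)) ((u' t : H)) := by
      have := heq1 t (u' t)
      linarith
    have hTsymm : (inner ℝ (T t (U t)) ((u' t : H)) : ℝ)
        = inner ℝ ((u' t : H)) (T t (U t)) := real_inner_comm _ _
    have hnorm : (inner ℝ ((u' t : H)) ((u' t : H)) : ℝ) = ‖u' t‖^2 := by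
      rw [real_inner_self_eq_norm_sq, Submodule.coe_norm]
    rw [hqsymm, hsymm, hUterm, hq'A, hb1, hbe, hTsymm, hnorm]
    ring
  rw [← hval]
  exact hD
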